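/- Let n₁, n₂, p be positive integers with n₁ + n₂ ≤ p. Suppose A, A' ∈ M_{p,n₁}(ℂ) have rank n₁, B, B' ∈ M_{p,n₂}(ℂ) have rank n₂, and AᵀB = A'ᵀB'. Then there exists an invertible p×p complex matrix u such that A' = u·A and B' = (u⁻¹)ᵀ·B. -/

import Mathlib

open Matrix

open LinearMap Submodule FiniteDimensional Module


set_option maxHeartbeats 1000000 in
set_option synthInstance.maxHeartbeats 400000 in
theorem key_extension (p n₁ n₂ : ℕ)
    (a a' : (Fin n₁ → ℂ) →ₗ[ℂ] (Fin p → ℂ))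
    (β β' : (Fin p → ℂ) →ₗ[ℂ] (Fin n₂ → ℂ))
    (ha : Function.Injective a) (ha' : Function.Injective a')
    (hβ : Function.Surjective β) (hβ' : Function.Surjective β')
    (hcab : β'.comp a' = β.comp a) :
    ∃ e : (Fin p → ℂ) →ₗ[ℂ] (Fin p → ℂ), Function.Bijective e ∧
      e.comp a = a' ∧ β'.comp e = β := by
  classical
  set V : Submodule ℂ (Fin p → ℂ) := LinearMap.range a with hVdef
  set K₀ : Submodule ℂ (Fin p → ℂ) := LinearMap.ker β with hK₀def
  set K : Submodule ℂ (Fin p → ℂ) := LinearMap.ker β' with hKdef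
  set V₀ : Submodule ℂ (Fin p → ℂ) := V ⊓ K₀ with hV₀def
  have hV₀V : V₀ ≤ V := inf_le_left
  have hV₀K₀ : V₀ ≤ K₀ := inf_le_right
  -- the map F : V → (Fin p → ℂ), F (a x) = a' x
  let eV : (Fin n₁ → ℂ) ≃ₗ[ℂ] V := LinearEquiv.ofInjective a ha
  let F : V →ₗ[ℂ] (Fin p → ℂ) := a'.comp (eV.symm : V →ₗ[ℂ] (Fin n₁ → ℂ))
  have hF : ∀ (x : Fin n₁ → ℂ) (hx : a x ∈ V), F ⟨a x, hx⟩ = a' x := by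
    intro x hx
    have h1 : (⟨a x, hx⟩ : V) = eV x := by
      apply Subtype.ext
      exact (LinearEquiv.ofInjective_apply a x).symm
    simp only [F, LinearMap.comp_apply, h1, LinearEquiv.coe_coe,
      LinearEquiv.symm_apply_apply]
  have hFinj : Function.Injective F := by
    refine ha'.comp ?_
    exact (LinearEquiv.injective _)
  have hFβ : ∀ v : V, β' (F v) = β (v : (Fin p → ℂ)) := by
    rintro ⟨v, hv⟩
    obtain ⟨x, rfl⟩ := hv
    rw [hF x ⟨x, rfl⟩]
    exact LinearMap.ext_iff.mp hcab x
  -- V₁ : a complement of V₀ in V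
  obtain ⟨C, hC⟩ := Submodule.exists_isCompl (V₀.comap V.subtype)
  set V₁ : Submodule ℂ (Fin p → ℂ) := C.map V.subtype with hV₁def
  have hV₁V : V₁ ≤ V := Submodule.map_subtype_le _ _
  have hsupV : V₀ ⊔ V₁ = V := by
    have h1 : (V₀.comap V.subtype).map V.subtype = V₀ := by
      rw [Submodule.map_comap_subtype, inf_eq_right.mpr hV₀V]
    calc V₀ ⊔ V₁ = ((V₀.comap V.subtype) ⊔ C).map V.subtype := by
          rw [Submodule.map_sup, h1]
      _ = V := by rw [codisjoint_iff.mp hC.codisjoint, Submodule.map_top,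
          Submodule.range_subtype]
  have hdisjV : V₀ ⊓ V₁ = ⊥ := by
    rw [eq_bot_iff]
    rintro x ⟨hx0, hx1⟩
    obtain ⟨c, hcC, rfl⟩ := hx1
    have hc0 : c ∈ V₀.comap V.subtype := hx0
    have := disjoint_def.mp hC.disjoint c hc0 hcC
    simp [this]
  have hV₁K₀ : V₁ ⊓ K₀ = ⊥ := by
    rw [eq_bot_iff]
    intro x hx
    have h1 : x ∈ V₀ ⊓ V₁ := by
      refine ⟨⟨hV₁V hx.1, hx.2⟩, hx.1⟩
    rw [hdisjV] at h1
    exact h1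
  -- M : a complement of K₀ containing V₁
  obtain ⟨M₂, hM₂⟩ := Submodule.exists_isCompl (V₁ ⊔ K₀)
  set M : Submodule ℂ (Fin p → ℂ) := V₁ ⊔ M₂ with hMdef
  have hV₁M : V₁ ≤ M := le_sup_left
  have hKM : IsCompl K₀ M := by
    constructor
    · rw [disjoint_def]
      intro x hxK hxM
      obtain ⟨v, hv, m, hm, rfl⟩ := Submodule.mem_sup.mp hxM
      have hmem : m ∈ V₁ ⊔ K₀ := by
        rw [(add_sub_cancel_left v m).symm]
        exact Submodule.sub_mem _ (Submodule.mem_sup_right hxK)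
          (Submodule.mem_sup_left hv)
      have hm0 : m = 0 := disjoint_def.mp hM₂.disjoint m hmem hm
      rw [hm0, add_zero] at hxK ⊢
      have hv0 : v ∈ V₁ ⊓ K₀ := ⟨hv, hxK⟩
      rw [hV₁K₀] at hv0
      simpa using hv0
    · rw [codisjoint_iff]
      have : K₀ ⊔ M = (V₁ ⊔ K₀) ⊔ M₂ := by
        rw [hMdef]
        rw [sup_comm V₁ K₀, sup_assoc]
      rw [this, codisjoint_iff.mp hM₂.codisjoint]
  set π : (Fin p → ℂ) →ₗ[ℂ] K₀ := Submodule.linearProjOfIsCompl K₀ M hKM with hπdef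
  -- the section s of β'
  obtain ⟨s₀, hs₀⟩ := β'.exists_rightInverse_of_surjective
    (LinearMap.range_eq_top.mpr hβ')
  have hs₀' : ∀ y, β' (s₀ y) = y := fun y => LinearMap.ext_iff.mp hs₀ y
  set βV₁ : V₁ →ₗ[ℂ] (Fin n₂ → ℂ) := β.domRestrict V₁ with hβV₁def
  have hβV₁inj : Function.Injective βV₁ := by
    rw [← LinearMap.ker_eq_bot, eq_bot_iff]
    rintro ⟨x, hx⟩ hker
    have : x ∈ V₁ ⊓ K₀ := ⟨hx, LinearMap.mem_ker.mpr (by simpa [βV₁] using hker)⟩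
    rw [hV₁K₀] at this
    simpa using this
  set Q₁ : Submodule ℂ (Fin n₂ → ℂ) := LinearMap.range βV₁ with hQ₁def
  let eQ : V₁ ≃ₗ[ℂ] Q₁ := LinearEquiv.ofInjective βV₁ hβV₁inj
  obtain ⟨Q₂, hQ⟩ := Submodule.exists_isCompl Q₁
  let s₁ : Q₁ →ₗ[ℂ] (Fin p → ℂ) := F.comp ((Submodule.inclusion hV₁V).comp
    (eQ.symm : Q₁ →ₗ[ℂ] V₁))
  let s₂ : Q₂ →ₗ[ℂ] (Fin p → ℂ) := s₀.comp Q₂.subtype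
  set s : (Fin n₂ → ℂ) →ₗ[ℂ] (Fin p → ℂ) := LinearMap.ofIsCompl hQ s₁ s₂ with hsdef
  have hs₁val : ∀ q : Q₁, s (q : Fin n₂ → ℂ) = s₁ q := fun q =>
    LinearMap.ofIsCompl_left_apply hQ q
  have hsV₁ : ∀ (v : (Fin p → ℂ)) (hv : v ∈ V₁), s (β v) = F ⟨v, hV₁V hv⟩ := by
    intro v hv
    have h1 : β v = βV₁ ⟨v, hv⟩ := rfl
    have h2 : βV₁ ⟨v, hv⟩ = ((eQ ⟨v, hv⟩ : Q₁) : Fin n₂ → ℂ) := rfl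
    rw [h1, h2, hs₁val]
    simp only [s₁, LinearMap.comp_apply, LinearEquiv.coe_coe,
      LinearEquiv.symm_apply_apply]
    rfl
  have hsβ' : ∀ y, β' (s y) = y := by
    intro y
    obtain ⟨y₁, y₂, hy₁, hy₂, rfl⟩ := Submodule.codisjoint_iff_exists_add_eq.mp
      hQ.codisjoint y
    rw [map_add, map_add]
    have e1 : s y₁ = s₁ ⟨y₁, hy₁⟩ := hs₁val ⟨y₁, hy₁⟩
    have e2 : s y₂ = s₂ ⟨y₂, hy₂⟩ := LinearMap.ofIsCompl_right_apply hQ ⟨y₂, hy₂⟩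
    rw [e1, e2]
    congr 1
    · -- β' (s₁ ⟨y₁, hy₁⟩) = y₁
      simp only [s₁, LinearMap.comp_apply, LinearEquiv.coe_coe]
      rw [show ((Submodule.inclusion hV₁V) (eQ.symm ⟨y₁, hy₁⟩) : V)
          = ⟨(eQ.symm ⟨y₁, hy₁⟩ : (Fin p → ℂ)), hV₁V (eQ.symm ⟨y₁, hy₁⟩).2⟩ from rfl]
      rw [hFβ]
      calc βV₁ (eQ.symm ⟨y₁, hy₁⟩)
          = ((eQ (eQ.symm ⟨y₁, hy₁⟩) : Q₁) : Fin n₂ → ℂ) := rfl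
        _ = y₁ := by rw [eQ.apply_symm_apply ⟨y₁, hy₁⟩]
    · simp only [s₂, LinearMap.comp_apply, Submodule.coe_subtype, hs₀']
  -- the map g : K₀ → (Fin p → ℂ) with range K, restricting to F on V₀
  set V₀' : Submodule ℂ K₀ := V₀.comap K₀.subtype with hV₀'def
  let ι₀ : V₀' →ₗ[ℂ] (Fin p → ℂ) := F.comp ((Submodule.inclusion hV₀V).comp
    ((Submodule.comapSubtypeEquivOfLe hV₀K₀) : V₀' →ₗ[ℂ] V₀))
  have hι₀mem : ∀ z : V₀', ι₀ z ∈ K := by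
    intro z
    simp only [ι₀, LinearMap.comp_apply, LinearEquiv.coe_coe]
    rw [LinearMap.mem_ker, hFβ]
    have : ((Submodule.inclusion hV₀V) ((Submodule.comapSubtypeEquivOfLe hV₀K₀) z) : (Fin p → ℂ))
        ∈ K₀ := by
      rw [show ((Submodule.inclusion hV₀V) ((Submodule.comapSubtypeEquivOfLe hV₀K₀) z) : (Fin p → ℂ))
        = (((Submodule.comapSubtypeEquivOfLe hV₀K₀) z : V₀) : (Fin p → ℂ)) from rfl]
      exact hV₀K₀ ((Submodule.comapSubtypeEquivOfLe hV₀K₀) z).2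
    exact this
  let φK : V₀' →ₗ[ℂ] K := ι₀.codRestrict K hι₀mem
  have hφKinj : Function.Injective φK := by
    intro x y hxy
    have h1 : ι₀ x = ι₀ y := congrArg Subtype.val hxy
    have h2 : Function.Injective ι₀ := by
      refine hFinj.comp ?_
      exact (Submodule.inclusion_injective hV₀V).comp (LinearEquiv.injective _)
    exact h2 h1
  obtain ⟨T', hT'⟩ := Submodule.exists_isCompl V₀'
  set G' : Submodule ℂ K := LinearMap.range φK with hG'def
  obtain ⟨W', hW'⟩ := Submodule.exists_isCompl G'
  have hrKK : finrank ℂ K₀ = finrank ℂ K := by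
    have h1 := β.finrank_range_add_finrank_ker
    have h2 := β'.finrank_range_add_finrank_ker
    rw [LinearMap.range_eq_top.mpr hβ, finrank_top] at h1
    rw [LinearMap.range_eq_top.mpr hβ', finrank_top] at h2
    rw [← hK₀def] at h1
    rw [← hKdef] at h2
    omega
  have hrTW : finrank ℂ T' = finrank ℂ W' := by
    have h3 := Submodule.finrank_add_eq_of_isCompl hT'
    have h4 := Submodule.finrank_add_eq_of_isCompl hW'
    have h5 := LinearMap.finrank_range_of_inj hφKinj
    rw [← hG'def] at h5
    omega
  haveI : Module.Free ℂ ↥T' := Module.Free.of_divisionRing ℂ ↥T'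
  haveI : Module.Free ℂ ↥W' := Module.Free.of_divisionRing ℂ ↥W'
  haveI : Module.Finite ℂ ↥T' := Module.Finite.of_injective T'.subtype
    (Submodule.injective_subtype T')
  haveI : Module.Finite ℂ ↥W' := Module.Finite.of_injective W'.subtype
    (Submodule.injective_subtype W')
  obtain ⟨ψ⟩ := FiniteDimensional.nonempty_linearEquiv_of_finrank_eq hrTW
  set H : K₀ →ₗ[ℂ] K := LinearMap.ofIsCompl hT' φK
    (W'.subtype.comp (ψ : T' →ₗ[ℂ] W')) with hHdef
  have hHsurj : Function.Surjective H := by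
    intro x
    have hx : (x : K) ∈ G' ⊔ W' := by
      rw [codisjoint_iff.mp hW'.codisjoint]; trivial
    obtain ⟨y, hy, z, hz, hyz⟩ := Submodule.mem_sup.mp hx
    obtain ⟨v, rfl⟩ := hy
    refine ⟨(v : K₀) + ((ψ.symm ⟨z, hz⟩ : T') : K₀), ?_⟩
    rw [map_add, LinearMap.ofIsCompl_left_apply, LinearMap.ofIsCompl_right_apply]
    simp only [LinearMap.comp_apply, LinearEquiv.coe_coe, LinearEquiv.apply_symm_apply,
      Submodule.coe_subtype]
    exact hyz
  set g : K₀ →ₗ[ℂ] (Fin p → ℂ) := K.subtype.comp H with hgdef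
  have hgK : ∀ y : K₀, g y ∈ K := fun y => (H y).2
  have hgV₀ : ∀ (y : K₀) (hy : (y : (Fin p → ℂ)) ∈ V₀), g y = F ⟨(y : (Fin p → ℂ)), hV₀V hy⟩ := by
    intro y hy
    have hy' : y ∈ V₀' := hy
    have h1 : H y = φK ⟨y, hy'⟩ := LinearMap.ofIsCompl_left_apply hT' ⟨y, hy'⟩
    have h2 : g y = ι₀ ⟨y, hy'⟩ := by
      rw [hgdef]
      simp only [LinearMap.comp_apply, Submodule.coe_subtype, h1]
      rfl
    rw [h2]
    simp only [ι₀, LinearMap.comp_apply, LinearEquiv.coe_coe]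
    congr 1
  -- the endomorphism e
  set e : (Fin p → ℂ) →ₗ[ℂ] (Fin p → ℂ) := g.comp π + s.comp β with hedef
  have heapp : ∀ x : (Fin p → ℂ), e x = g (π x) + s (β x) := fun x => rfl
  have hβ'e : ∀ x : (Fin p → ℂ), β' (e x) = β x := by
    intro x
    rw [heapp, map_add]
    have h1 : β' (g (π x)) = 0 := hgK (π x)
    rw [h1, hsβ', zero_add]
  have hea : ∀ x, e (a x) = a' x := by
    intro x
    have haxV : a x ∈ V := ⟨x, rfl⟩
    have hmem : a x ∈ V₀ ⊔ V₁ := by rw [hsupV]; exact haxV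
    obtain ⟨y, hy, z, hz, hyz⟩ := Submodule.mem_sup.mp hmem
    have hyK₀ : y ∈ K₀ := hV₀K₀ hy
    have hzM : z ∈ M := hV₁M hz
    have hπ : π (a x) = ⟨y, hyK₀⟩ := by
      rw [← hyz, map_add]
      rw [show π y = π ((⟨y, hyK₀⟩ : K₀) : (Fin p → ℂ)) from rfl]
      rw [show π ((⟨y, hyK₀⟩ : K₀) : (Fin p → ℂ)) = ⟨y, hyK₀⟩ from
          Submodule.linearProjOfIsCompl_apply_left hKM ⟨y, hyK₀⟩,
        show π z = 0 from Submodule.linearProjOfIsCompl_apply_right' hKM hzM, add_zero]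
    have hβax : β (a x) = β z := by
      rw [← hyz, map_add]
      have : β y = 0 := hyK₀
      rw [this, zero_add]
    rw [heapp, hπ, hβax, hgV₀ ⟨y, hyK₀⟩ hy, hsV₁ z hz, ← map_add]
    have : (⟨y, hV₀V hy⟩ : V) + ⟨z, hV₁V hz⟩ = ⟨a x, haxV⟩ := by
      apply Subtype.ext
      simp [hyz]
    rw [this, hF]
  have hesurj : Function.Surjective e := by
    intro zz
    obtain ⟨x, hx⟩ := hβ (β' zz)
    obtain ⟨k, w, hk, hw, hkw⟩ := Submodule.codisjoint_iff_exists_add_eq.mp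
      hKM.codisjoint x
    have hβw : β w = β' zz := by
      have : β k = 0 := hk
      rw [← hx, ← hkw, map_add, this, zero_add]
    have hew : e w = s (β' zz) := by
      rw [heapp, show π w = 0 from Submodule.linearProjOfIsCompl_apply_right' hKM hw, map_zero,
        zero_add, hβw]
    have hzK : zz - s (β' zz) ∈ K := by
      rw [hKdef, LinearMap.mem_ker, map_sub, hsβ', sub_self]
    obtain ⟨y, hy⟩ := hHsurj ⟨zz - s (β' zz), hzK⟩
    have hey : e (y : (Fin p → ℂ)) = zz - s (β' zz) := by
      rw [heapp]
      have h1 : π (y : (Fin p → ℂ)) = y := Submodule.linearProjOfIsCompl_apply_left hKM y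
      have h2 : β (y : (Fin p → ℂ)) = 0 := y.2
      rw [h1, h2, map_zero, add_zero, hgdef]
      simp only [LinearMap.comp_apply, Submodule.coe_subtype, hy]
    refine ⟨(y : (Fin p → ℂ)) + w, ?_⟩
    rw [map_add, hey, hew]
    ring_nf
  have heinj : Function.Injective e := LinearMap.injective_iff_surjective.mpr hesurj
  exact ⟨e, ⟨heinj, hesurj⟩, LinearMap.ext hea, LinearMap.ext hβ'e⟩


/-- General-linear analogue of Witt's theorem (Lemma B.2(iii) for the dual
pair (U(n₁,n₂), U(p,q))): if AᵀB = A'ᵀB' with A, A' of full rank n₁ and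
B, B' of full rank n₂, then (A',B') = (u·A, (u⁻¹)ᵀ·B) for some u ∈ GL(p,ℂ). -/
theorem stmt_9 (n₁ n₂ p : ℕ) (hn₁ : 0 < n₁) (hn₂ : 0 < n₂) (hp : 0 < p)
    (hsp : n₁ + n₂ ≤ p)
    (A A' : Matrix (Fin p) (Fin n₁) ℂ) (B B' : Matrix (Fin p) (Fin n₂) ℂ)
    (hA : A.rank = n₁) (hA' : A'.rank = n₁)
    (hB : B.rank = n₂) (hB' : B'.rank = n₂)
    (h : Aᵀ * B = A'ᵀ * B') :
    ∃ u : Matrix (Fin p) (Fin p) ℂ, IsUnit u ∧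
      A' = u * A ∧ B' = (u⁻¹)ᵀ * B := by
  have hinj : ∀ M : Matrix (Fin p) (Fin n₁) ℂ, M.rank = n₁ →
      Function.Injective M.mulVecLin := by
    intro M hM
    rw [← LinearMap.ker_eq_bot]
    have h1 := M.mulVecLin.finrank_range_add_finrank_ker
    rw [Module.finrank_fin_fun, show finrank ℂ (LinearMap.range M.mulVecLin) = M.rank from rfl,
      hM] at h1
    exact Submodule.finrank_eq_zero.mp (by omega)
  have hsurj : ∀ M : Matrix (Fin p) (Fin n₂) ℂ, M.rank = n₂ →
      Function.Surjective (Mᵀ.mulVecLin) := by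
    intro M hM
    rw [← LinearMap.range_eq_top]
    apply Submodule.eq_top_of_finrank_eq
    rw [show finrank ℂ (LinearMap.range Mᵀ.mulVecLin) = Mᵀ.rank from rfl,
      Matrix.rank_transpose, hM, Module.finrank_fin_fun]
  have hcab : (B'ᵀ.mulVecLin).comp A'.mulVecLin = (Bᵀ.mulVecLin).comp A.mulVecLin := by
    rw [← Matrix.mulVecLin_mul, ← Matrix.mulVecLin_mul]
    congr 1
    have := congrArg Matrix.transpose h
    simpa [Matrix.transpose_mul] using this.symm
  obtain ⟨e, hbij, hea, hβe⟩ := key_extension p n₁ n₂ A.mulVecLin A'.mulVecLin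
    Bᵀ.mulVecLin B'ᵀ.mulVecLin (hinj A hA) (hinj A' hA') (hsurj B hB) (hsurj B' hB') hcab
  let eE := LinearEquiv.ofBijective e hbij
  set u := LinearMap.toMatrix' e with hudef
  set u' := LinearMap.toMatrix' (eE.symm : (Fin p → ℂ) →ₗ[ℂ] (Fin p → ℂ)) with hu'def
  have hmv : u.mulVecLin = e := by
    rw [← Matrix.toLin'_apply', hudef, Matrix.toLin'_toMatrix']
  have huu' : u * u' = 1 := by
    rw [hudef, hu'def, ← LinearMap.toMatrix'_comp]
    have : e.comp (eE.symm : (Fin p → ℂ) →ₗ[ℂ] (Fin p → ℂ)) = LinearMap.id := by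
      exact LinearMap.ext fun x => eE.apply_symm_apply x
    rw [this, LinearMap.toMatrix'_id]
  have hu'u : u' * u = 1 := by
    rw [hudef, hu'def, ← LinearMap.toMatrix'_comp]
    have : (eE.symm : (Fin p → ℂ) →ₗ[ℂ] (Fin p → ℂ)).comp e = LinearMap.id := by
      exact LinearMap.ext fun x => eE.symm_apply_apply x
    rw [this, LinearMap.toMatrix'_id]
  have hu : IsUnit u := ⟨⟨u, u', huu', hu'u⟩, rfl⟩
  refine ⟨u, hu, ?_, ?_⟩
  · apply Matrix.toLin'.injective
    rw [Matrix.toLin'_apply', Matrix.toLin'_apply', Matrix.mulVecLin_mul, hmv, hea]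
  · have hBt : B'ᵀ * u = Bᵀ := by
      apply Matrix.toLin'.injective
      rw [Matrix.toLin'_apply', Matrix.toLin'_apply', Matrix.mulVecLin_mul, hmv, hβe]
    have hdet : IsUnit u.det := (Matrix.isUnit_iff_isUnit_det u).mp hu
    have h2 : B'ᵀ = Bᵀ * u⁻¹ := by
      rw [← hBt, Matrix.mul_assoc, Matrix.mul_nonsing_inv u hdet, Matrix.mul_one]
    calc B' = (B'ᵀ)ᵀ := (transpose_transpose B').symm
      _ = (Bᵀ * u⁻¹)ᵀ := by rw [h2]
      _ = (u⁻¹)ᵀ * B := by rw [Matrix.transpose_mul, transpose_transpose]
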